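/- Let U be a finite nonempty set, d a metric on U, and α > 0. Let n, m be natural numbers with m ≤ n, let X, Y : Fin n → U be two sequences of length n, and let S : Fin m → U be any sequence of length m. Then the coordinatewise products of Exponential Mechanism probabilities satisfy ∏_{i < m} Pr[Φ_EM(X[i]) = S[i]] ≤ exp(α · Σ_{i < n} d(X[i], Y[i])) · ∏_{i < m} Pr[Φ_EM(Y[i]) = S[i]]. -/

import Mathlib

/-- The probability that the Exponential Mechanism with distance `d` and
privacy parameter `α` outputs `y` on input `v`. -/
noncomputable def EMprob {U : Type*} [Fintype U] (d : U → U → ℝ) (α : ℝ) (v y : U) : ℝ :=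
  Real.exp (-α * d v y / 2) / ∑ z, Real.exp (-α * d v z / 2)

lemma EMprob_nonneg {U : Type*} [Fintype U] (d : U → U → ℝ) (α : ℝ) (v y : U) :
    0 ≤ EMprob d α v y := by
  unfold EMprob
  apply div_nonneg (Real.exp_pos _).le
  exact Finset.sum_nonneg fun z _ => (Real.exp_pos _).le

lemma EMprob_key {U : Type*} [Fintype U] [Nonempty U]
    (d : U → U → ℝ) (α : ℝ) (hα : 0 < α)
    (hd_symm : ∀ x y, d x y = d y x)
    (hd_tri : ∀ x y z, d x z ≤ d x y + d y z)
    (x y s : U) :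
    EMprob d α x s ≤ Real.exp (α * d x y) * EMprob d α y s := by
  have hDx : 0 < ∑ z, Real.exp (-α * d x z / 2) :=
    Finset.sum_pos (fun z _ => Real.exp_pos _) Finset.univ_nonempty
  have hDy : 0 < ∑ z, Real.exp (-α * d y z / 2) :=
    Finset.sum_pos (fun z _ => Real.exp_pos _) Finset.univ_nonempty
  set c : ℝ := α * d x y / 2 with hc
  have hN : Real.exp (-α * d x s / 2) ≤ Real.exp c * Real.exp (-α * d y s / 2) := by
    rw [← Real.exp_add]
    apply Real.exp_le_exp.mpr
    have h2 := hd_tri y x s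
    rw [hd_symm y x] at h2
    nlinarith [mul_le_mul_of_nonneg_left h2 hα.le]
  have hD : (∑ z, Real.exp (-α * d y z / 2)) ≤ Real.exp c * ∑ z, Real.exp (-α * d x z / 2) := by
    rw [Finset.mul_sum]
    apply Finset.sum_le_sum
    intro z _
    rw [← Real.exp_add]
    apply Real.exp_le_exp.mpr
    have h := hd_tri x y z
    nlinarith [mul_le_mul_of_nonneg_left h hα.le]
  unfold EMprob
  rw [mul_div_assoc']
  rw [div_le_div_iff₀ hDx hDy]
  have he : Real.exp (α * d x y) = Real.exp c * Real.exp c := by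
    rw [← Real.exp_add, hc]; ring_nf
  rw [he]
  calc Real.exp (-α * d x s / 2) * ∑ z, Real.exp (-α * d y z / 2)
      ≤ (Real.exp c * Real.exp (-α * d y s / 2)) * (Real.exp c * ∑ z, Real.exp (-α * d x z / 2)) := by
        apply mul_le_mul hN hD hDy.le
        positivity
    _ = Real.exp c * Real.exp c * Real.exp (-α * d y s / 2) * ∑ z, Real.exp (-α * d x z / 2) := by
        ring

/-- Coordinatewise products of Exponential Mechanism probabilities over a
prefix of length `m ≤ n` satisfy the CLDP bound with the sequence distance. -/
theorem em_product_bound {U : Type*} [Fintype U] [Nonempty U]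
    (d : U → U → ℝ) (α : ℝ) (hα : 0 < α)
    (hd_nonneg : ∀ x y, 0 ≤ d x y)
    (hd_symm : ∀ x y, d x y = d y x)
    (hd_tri : ∀ x y z, d x z ≤ d x y + d y z)
    (hd_eq : ∀ x y, d x y = 0 ↔ x = y)
    (n m : ℕ) (hmn : m ≤ n)
    (X Y : Fin n → U) (S : Fin m → U) :
    (∏ i : Fin m, EMprob d α (X (Fin.castLE hmn i)) (S i))
      ≤ Real.exp (α * ∑ i : Fin n, d (X i) (Y i)) *
        ∏ i : Fin m, EMprob d α (Y (Fin.castLE hmn i)) (S i) := by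
  calc (∏ i : Fin m, EMprob d α (X (Fin.castLE hmn i)) (S i))
      ≤ ∏ i : Fin m, Real.exp (α * d (X (Fin.castLE hmn i)) (Y (Fin.castLE hmn i))) *
          EMprob d α (Y (Fin.castLE hmn i)) (S i) := by
        apply Finset.prod_le_prod
        · intro i _; exact EMprob_nonneg _ _ _ _
        · intro i _; exact EMprob_key d α hα hd_symm hd_tri _ _ _
    _ = (∏ i : Fin m, Real.exp (α * d (X (Fin.castLE hmn i)) (Y (Fin.castLE hmn i)))) *
          ∏ i : Fin m, EMprob d α (Y (Fin.castLE hmn i)) (S i) := Finset.prod_mul_distrib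
    _ ≤ Real.exp (α * ∑ i : Fin n, d (X i) (Y i)) *
          ∏ i : Fin m, EMprob d α (Y (Fin.castLE hmn i)) (S i) := by
        apply mul_le_mul_of_nonneg_right _
          (Finset.prod_nonneg fun i _ => EMprob_nonneg _ _ _ _)
        rw [← Real.exp_sum]
        apply Real.exp_le_exp.mpr
        rw [← Finset.mul_sum]
        apply mul_le_mul_of_nonneg_left _ hα.le
        have : (∑ i : Fin m, d (X (Fin.castLE hmn i)) (Y (Fin.castLE hmn i)))
            = ∑ i ∈ Finset.univ.map (Fin.castLEEmb hmn), d (X i) (Y i) := by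
          rw [Finset.sum_map]; rfl
        rw [this]
        apply Finset.sum_le_sum_of_subset_of_nonneg (Finset.subset_univ _)
        intro i _ _; exact hd_nonneg _ _
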